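/- Consider K agents running federated inference with asymmetric asynchronous communication. Almost surely, the fusion-center belief on the true hypothesis converges to one: lim_{i→∞} μ_i(θ°) = 1 with probability 1. Precisely: for each i ≥ 1 and agent k let ψ_{k,i}(θ) ∝ f_k(ξ_{k,i}|θ) μ_{i-1}(θ) (normalized over θ), and let μ_i(θ) ∝ ∏_{k=1}^K ( ψ_{k,i}(θ)^{q_{k,i}} μ_{i-1}(θ)^{1-q_{k,i}} )^{π_k} (normalized over θ). Then μ_i(θ°) → 1 almost surely. -/

import Mathlib

open MeasureTheory ProbabilityTheory Filter Topology


/-- Rearrangement of a fourfold product measure. -/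
lemma aux_map_prodProdProdComm {α β γ δ : Type*} [MeasurableSpace α] [MeasurableSpace β]
    [MeasurableSpace γ] [MeasurableSpace δ]
    (μ1 : Measure α) (μ2 : Measure β) (μ3 : Measure γ) (μ4 : Measure δ)
    [SFinite μ1] [SFinite μ2] [SFinite μ3] [SFinite μ4] :
    Measure.map (fun x : (α × β) × (γ × δ) => ((x.1.1, x.2.1), (x.1.2, x.2.2)))
      ((μ1.prod μ2).prod (μ3.prod μ4)) = (μ1.prod μ3).prod (μ2.prod μ4) := by
  have hmα : Measurable (MeasurableEquiv.prodAssoc : (α × β) × (γ × δ) ≃ᵐ _) :=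
    MeasurableEquiv.prodAssoc.measurable
  -- β' : (b,(c,d)) ↦ (c,(b,d))
  set bfun : β × (γ × δ) → γ × (β × δ) := fun x => (x.2.1, (x.1, x.2.2)) with hbfun
  have hbmeas : Measurable bfun := by fun_prop
  have hstep1 : Measure.map bfun (μ2.prod (μ3.prod μ4)) = μ3.prod (μ2.prod μ4) := by
    have h1 : Measure.map (MeasurableEquiv.prodAssoc : (β × γ) × δ ≃ᵐ β × γ × δ)
        ((μ2.prod μ3).prod μ4) = μ2.prod (μ3.prod μ4) := Measure.prodAssoc_prod
    have h2 : Measure.map (MeasurableEquiv.prodAssoc : (β × γ) × δ ≃ᵐ β × γ × δ).symm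
        (μ2.prod (μ3.prod μ4)) = (μ2.prod μ3).prod μ4 := by
      rw [← h1, MeasurableEquiv.map_symm_map]
    have h3 : Measure.map (Prod.map (Prod.swap : β × γ → γ × β) (id : δ → δ))
        ((μ2.prod μ3).prod μ4) = (μ3.prod μ2).prod μ4 := by
      rw [← Measure.map_prod_map _ _ measurable_swap measurable_id, Measure.prod_swap,
        Measure.map_id]
    have h4 : Measure.map (MeasurableEquiv.prodAssoc : (γ × β) × δ ≃ᵐ γ × β × δ)
        ((μ3.prod μ2).prod μ4) = μ3.prod (μ2.prod μ4) := Measure.prodAssoc_prod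
    calc Measure.map bfun (μ2.prod (μ3.prod μ4))
        = Measure.map ((MeasurableEquiv.prodAssoc : (γ × β) × δ ≃ᵐ γ × β × δ) ∘
            (Prod.map (Prod.swap : β × γ → γ × β) (id : δ → δ)) ∘
            (MeasurableEquiv.prodAssoc : (β × γ) × δ ≃ᵐ β × γ × δ).symm)
            (μ2.prod (μ3.prod μ4)) := by
          congr 1
      _ = μ3.prod (μ2.prod μ4) := by
          rw [← Measure.map_map (by fun_prop) (by fun_prop), ← Measure.map_map (by fun_prop)
            (by fun_prop), h2, h3, h4]
  have hA : Measure.map (MeasurableEquiv.prodAssoc : (α × β) × (γ × δ) ≃ᵐ α × β × (γ × δ))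
      ((μ1.prod μ2).prod (μ3.prod μ4)) = μ1.prod (μ2.prod (μ3.prod μ4)) :=
    Measure.prodAssoc_prod
  have hB : Measure.map (Prod.map (id : α → α) bfun) (μ1.prod (μ2.prod (μ3.prod μ4))) =
      μ1.prod (μ3.prod (μ2.prod μ4)) := by
    rw [← Measure.map_prod_map _ _ measurable_id hbmeas, Measure.map_id, hstep1]
  have hC : Measure.map (MeasurableEquiv.prodAssoc :
      (α × γ) × (β × δ) ≃ᵐ α × γ × (β × δ)).symm (μ1.prod (μ3.prod (μ2.prod μ4))) =
      (μ1.prod μ3).prod (μ2.prod μ4) := by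
    rw [← (Measure.prodAssoc_prod (μ := μ1) (ν := μ3) (τ := μ2.prod μ4)),
      MeasurableEquiv.map_symm_map]
  calc Measure.map (fun x : (α × β) × (γ × δ) => ((x.1.1, x.2.1), (x.1.2, x.2.2)))
        ((μ1.prod μ2).prod (μ3.prod μ4))
      = Measure.map ((MeasurableEquiv.prodAssoc :
          (α × γ) × (β × δ) ≃ᵐ α × γ × (β × δ)).symm ∘ (Prod.map (id : α → α) bfun) ∘
          (MeasurableEquiv.prodAssoc : (α × β) × (γ × δ) ≃ᵐ α × β × (γ × δ)))
          ((μ1.prod μ2).prod (μ3.prod μ4)) := by congr 1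
    _ = (μ1.prod μ3).prod (μ2.prod μ4) := by
        rw [← Measure.map_map (by fun_prop) (by fun_prop), ← Measure.map_map (by fun_prop)
          (by fun_prop), hA, hB, hC]


/-- Combine independences to get independence of mixed pairs. -/
lemma aux_indepFun_pair {Ω α β γ δ : Type*} [MeasurableSpace Ω] {P : Measure Ω}
    [IsProbabilityMeasure P]
    [MeasurableSpace α] [MeasurableSpace β] [MeasurableSpace γ] [MeasurableSpace δ]
    {f1 : Ω → α} {f2 : Ω → β} {g1 : Ω → γ} {g2 : Ω → δ}
    (hf1 : Measurable f1) (hf2 : Measurable f2) (hg1 : Measurable g1) (hg2 : Measurable g2)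
    (hff : IndepFun f1 f2 P) (hgg : IndepFun g1 g2 P)
    (h11 : IndepFun f1 g1 P) (h22 : IndepFun f2 g2 P)
    (hfg : IndepFun (fun ω => (f1 ω, f2 ω)) (fun ω => (g1 ω, g2 ω)) P) :
    IndepFun (fun ω => (f1 ω, g1 ω)) (fun ω => (f2 ω, g2 ω)) P := by
  rw [indepFun_iff_map_prod_eq_prod_map_map ((hf1.prodMk hg1).aemeasurable)
    ((hf2.prodMk hg2).aemeasurable)]
  rw [indepFun_iff_map_prod_eq_prod_map_map (hf1.aemeasurable) (hg1.aemeasurable)] at h11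
  rw [indepFun_iff_map_prod_eq_prod_map_map (hf2.aemeasurable) (hg2.aemeasurable)] at h22
  rw [indepFun_iff_map_prod_eq_prod_map_map (hf1.aemeasurable) (hf2.aemeasurable)] at hff
  rw [indepFun_iff_map_prod_eq_prod_map_map (hg1.aemeasurable) (hg2.aemeasurable)] at hgg
  rw [indepFun_iff_map_prod_eq_prod_map_map ((hf1.prodMk hf2).aemeasurable)
    ((hg1.prodMk hg2).aemeasurable)] at hfg
  have key : (fun ω => ((f1 ω, g1 ω), (f2 ω, g2 ω))) =
      (fun x : (α × β) × (γ × δ) => ((x.1.1, x.2.1), (x.1.2, x.2.2))) ∘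
      (fun ω => ((f1 ω, f2 ω), (g1 ω, g2 ω))) := rfl
  have i1 : IsProbabilityMeasure (Measure.map f1 P) := Measure.isProbabilityMeasure_map hf1.aemeasurable
  have i2 : IsProbabilityMeasure (Measure.map f2 P) := Measure.isProbabilityMeasure_map hf2.aemeasurable
  have i3 : IsProbabilityMeasure (Measure.map g1 P) := Measure.isProbabilityMeasure_map hg1.aemeasurable
  have i4 : IsProbabilityMeasure (Measure.map g2 P) := Measure.isProbabilityMeasure_map hg2.aemeasurable
  rw [key, ← Measure.map_map (by fun_prop) (by fun_prop), hfg, hff, hgg,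
    aux_map_prodProdProdComm, h11, h22]


lemma aux_tendsto_atBot {a : ℕ → ℝ} {L : ℝ} (hL : L < 0)
    (h : Tendsto (fun n : ℕ => a n / n) atTop (𝓝 L)) : Tendsto a atTop atBot := by
  have h2 : ∀ᶠ n : ℕ in atTop, a n / n < L / 2 := h.eventually_lt_const (by linarith)
  have h3 : ∀ᶠ n : ℕ in atTop, a n ≤ L / 2 * n := by
    filter_upwards [h2, eventually_ge_atTop 1] with n hn hn1
    have hnp : (0 : ℝ) < n := by exact_mod_cast hn1
    have := (div_lt_iff₀ hnp).mp hn
    linarith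
  have h4 : Tendsto (fun n : ℕ => L / 2 * (n : ℝ)) atTop atBot :=
    (tendsto_const_mul_atBot_of_neg (by linarith)).2 tendsto_natCast_atTop_atTop
  exact tendsto_atBot_mono' atTop h3 h4



/-- **Theorem 1 (pre-intervention), asymmetric asynchronous communication.**
In addition to the synchronous setup, each agent `k` participates at time `i` according
to a Bernoulli(`p k`) indicator `q k i ∈ {0,1}`, i.i.d. over time, independent across
agents, and independent of all observations.  The fusion center combines
`μ_i(θ) ∝ ∏_k (ψ_{k,i}(θ)^{q_{k,i}} μ_{i-1}(θ)^{1-q_{k,i}})^{π_k}`, filling in its own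
prior for non-participating agents.  Then the fusion-center belief on the true hypothesis
converges to one almost surely. -/
theorem asymmetric_belief_convergence
    {K : ℕ} (hK : 2 ≤ K)
    {Θ : Type*} [Fintype Θ] [Nonempty Θ] (θ₀ : Θ)
    (π : Fin K → ℝ) (hπ : ∀ k, π k ∈ Set.Ioo (0 : ℝ) 1) (hπsum : ∑ k, π k = 1)
    (p : Fin K → ℝ) (hp : ∀ k, p k ∈ Set.Ioc (0 : ℝ) 1)
    {X : Fin K → Type*} [∀ k, MeasurableSpace (X k)]
    (ν : ∀ k, Measure (X k)) (hν : ∀ k, SigmaFinite (ν k))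
    (f : ∀ k, Θ → X k → ℝ)
    (hfpos : ∀ k θ x, 0 < f k θ x)
    (hfmeas : ∀ k θ, Measurable (f k θ))
    (hfprob : ∀ k θ, ∫ x, f k θ x ∂ν k = 1)
    (d : Fin K → Θ → ℝ)
    (hdint : ∀ k θ, Integrable (fun x => f k θ₀ x * Real.log (f k θ₀ x / f k θ x)) (ν k))
    (hd : ∀ k θ, d k θ = ∫ x, f k θ₀ x * Real.log (f k θ₀ x / f k θ x) ∂ν k)
    (hglobal : ∀ θ, θ ≠ θ₀ → ∃ k, 0 < d k θ)
    {Ω : Type*} [MeasureSpace Ω] [IsProbabilityMeasure (ℙ : Measure Ω)]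
    (ξ : ∀ k : Fin K, ℕ → Ω → X k)
    (hξmeas : ∀ k i, Measurable (ξ k i))
    (hξindep : ∀ k, iIndepFun (ξ k) ℙ)
    (hξlaw : ∀ k i, Measure.map (ξ k i) ℙ =
      (ν k).withDensity (fun x => ENNReal.ofReal (f k θ₀ x)))
    (q : Fin K → ℕ → Ω → ℝ)
    (hqval : ∀ k i ω, q k i ω = 0 ∨ q k i ω = 1)
    (hqmeas : ∀ k i, Measurable (q k i))
    (hqlaw : ∀ k i, ℙ {ω | q k i ω = 1} = ENNReal.ofReal (p k))
    (hqindep : iIndepFun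
      (fun ki : Fin K × ℕ => q ki.1 ki.2) ℙ)
    (hqξindep : IndepFun (fun ω (ki : Fin K × ℕ) => q ki.1 ki.2 ω)
      (fun ω (ki : Fin K × ℕ) => ξ ki.1 ki.2 ω) ℙ)
    (μ₀ : Θ → ℝ) (hμ₀pos : ∀ θ, 0 < μ₀ θ) (hμ₀sum : ∑ θ, μ₀ θ = 1)
    (ψ : Fin K → ℕ → Ω → Θ → ℝ) (μ : ℕ → Ω → Θ → ℝ)
    (hinit : ∀ ω, μ 0 ω = μ₀)
    (hψ : ∀ (k : Fin K) (i : ℕ) (ω : Ω) (θ : Θ), ψ k (i + 1) ω θ =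
      f k θ (ξ k (i + 1) ω) * μ i ω θ /
        ∑ θ', f k θ' (ξ k (i + 1) ω) * μ i ω θ')
    (hμ : ∀ (i : ℕ) (ω : Ω) (θ : Θ), μ (i + 1) ω θ =
      (∏ k, (ψ k (i + 1) ω θ ^ q k (i + 1) ω *
          μ i ω θ ^ (1 - q k (i + 1) ω)) ^ π k) /
        ∑ θ', ∏ k, (ψ k (i + 1) ω θ' ^ q k (i + 1) ω *
          μ i ω θ' ^ (1 - q k (i + 1) ω)) ^ π k) :
    ∀ᵐ ω ∂ℙ, Tendsto (fun i => μ i ω θ₀) atTop (nhds 1) := by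
  classical
  -- positivity of beliefs
  have hμpos : ∀ i ω θ, 0 < μ i ω θ := by
    intro i
    induction i with
    | zero => intro ω θ; rw [hinit]; exact hμ₀pos θ
    | succ i ih =>
      intro ω θ
      have hDk : ∀ k : Fin K, 0 < ∑ θ', f k θ' (ξ k (i+1) ω) * μ i ω θ' := fun k =>
        Finset.sum_pos (fun θ' _ => mul_pos (hfpos _ _ _) (ih ω θ')) Finset.univ_nonempty
      have hψpos : ∀ (k : Fin K) θ', 0 < ψ k (i+1) ω θ' := fun k θ' => by
        rw [hψ]; exact div_pos (mul_pos (hfpos _ _ _) (ih ω θ')) (hDk k)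
      have hN : ∀ θ', 0 < ∏ k, (ψ k (i+1) ω θ' ^ q k (i+1) ω *
          μ i ω θ' ^ (1 - q k (i+1) ω)) ^ π k := fun θ' =>
        Finset.prod_pos fun k _ => Real.rpow_pos_of_pos
          (mul_pos (Real.rpow_pos_of_pos (hψpos k θ') _) (Real.rpow_pos_of_pos (ih ω θ') _)) _
      rw [hμ]
      exact div_pos (hN θ) (Finset.sum_pos (fun θ' _ => hN θ') Finset.univ_nonempty)
  -- beliefs sum to one
  have hμsum : ∀ i ω, ∑ θ, μ i ω θ = 1 := by
    intro i ω
    cases i with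
    | zero => rw [hinit]; exact hμ₀sum
    | succ i =>
      have hDk : ∀ k : Fin K, 0 < ∑ θ', f k θ' (ξ k (i+1) ω) * μ i ω θ' := fun k =>
        Finset.sum_pos (fun θ' _ => mul_pos (hfpos _ _ _) (hμpos i ω θ')) Finset.univ_nonempty
      have hψpos : ∀ (k : Fin K) θ', 0 < ψ k (i+1) ω θ' := fun k θ' => by
        rw [hψ]; exact div_pos (mul_pos (hfpos _ _ _) (hμpos i ω θ')) (hDk k)
      have hN : ∀ θ', 0 < ∏ k, (ψ k (i+1) ω θ' ^ q k (i+1) ω *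
          μ i ω θ' ^ (1 - q k (i+1) ω)) ^ π k := fun θ' =>
        Finset.prod_pos fun k _ => Real.rpow_pos_of_pos
          (mul_pos (Real.rpow_pos_of_pos (hψpos k θ') _) (Real.rpow_pos_of_pos (hμpos i ω θ')
            _)) _
      have hD : 0 < ∑ θ', ∏ k, (ψ k (i+1) ω θ' ^ q k (i+1) ω *
          μ i ω θ' ^ (1 - q k (i+1) ω)) ^ π k :=
        Finset.sum_pos (fun θ' _ => hN θ') Finset.univ_nonempty
      have : ∑ θ, μ (i+1) ω θ = (∑ θ, ∏ k, (ψ k (i+1) ω θ ^ q k (i+1) ω *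
          μ i ω θ ^ (1 - q k (i+1) ω)) ^ π k) / (∑ θ', ∏ k, (ψ k (i+1) ω θ' ^ q k (i+1) ω *
          μ i ω θ' ^ (1 - q k (i+1) ω)) ^ π k) := by
        rw [Finset.sum_div]; exact Finset.sum_congr rfl fun θ _ => hμ i ω θ
      rw [this, div_self hD.ne']
  -- log-ratio recursion
  have hΛ : ∀ i ω θ, Real.log (μ i ω θ) - Real.log (μ i ω θ₀) =
      (Real.log (μ₀ θ) - Real.log (μ₀ θ₀)) +
      ∑ j ∈ Finset.range i, ∑ k, π k * q k (j+1) ω *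
        (Real.log (f k θ (ξ k (j+1) ω)) - Real.log (f k θ₀ (ξ k (j+1) ω))) := by
    intro i
    induction i with
    | zero => intro ω θ; simp [hinit]
    | succ i ih =>
      intro ω θ
      rw [Finset.sum_range_succ, ← add_assoc, ← ih ω θ]
      have hDk : ∀ k : Fin K, 0 < ∑ θ', f k θ' (ξ k (i+1) ω) * μ i ω θ' := fun k =>
        Finset.sum_pos (fun θ' _ => mul_pos (hfpos _ _ _) (hμpos i ω θ')) Finset.univ_nonempty
      have hψpos : ∀ (k : Fin K) θ', 0 < ψ k (i+1) ω θ' := fun k θ' => by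
        rw [hψ]; exact div_pos (mul_pos (hfpos _ _ _) (hμpos i ω θ')) (hDk k)
      have hterm : ∀ (k : Fin K) θ', 0 < ψ k (i+1) ω θ' ^ q k (i+1) ω *
          μ i ω θ' ^ (1 - q k (i+1) ω) := fun k θ' =>
        mul_pos (Real.rpow_pos_of_pos (hψpos k θ') _) (Real.rpow_pos_of_pos (hμpos i ω θ') _)
      have hN : ∀ θ', 0 < ∏ k, (ψ k (i+1) ω θ' ^ q k (i+1) ω *
          μ i ω θ' ^ (1 - q k (i+1) ω)) ^ π k := fun θ' =>
        Finset.prod_pos fun k _ => Real.rpow_pos_of_pos (hterm k θ') _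
      have hD : 0 < ∑ θ', ∏ k, (ψ k (i+1) ω θ' ^ q k (i+1) ω *
          μ i ω θ' ^ (1 - q k (i+1) ω)) ^ π k :=
        Finset.sum_pos (fun θ' _ => hN θ') Finset.univ_nonempty
      have key : ∀ θ', Real.log (μ (i+1) ω θ') =
          (∑ k, π k * (q k (i+1) ω * (Real.log (f k θ' (ξ k (i+1) ω)) + Real.log (μ i ω θ')
            - Real.log (∑ θ'', f k θ'' (ξ k (i+1) ω) * μ i ω θ''))
            + (1 - q k (i+1) ω) * Real.log (μ i ω θ'))) -
          Real.log (∑ θ'', ∏ k, (ψ k (i+1) ω θ'' ^ q k (i+1) ω *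
            μ i ω θ'' ^ (1 - q k (i+1) ω)) ^ π k) := by
        intro θ'
        rw [hμ, Real.log_div (hN θ').ne' hD.ne',
          Real.log_prod (fun k _ => (Real.rpow_pos_of_pos (hterm k θ') _).ne')]
        congr 1
        refine Finset.sum_congr rfl fun k _ => ?_
        rw [Real.log_rpow (hterm k θ'),
          Real.log_mul (Real.rpow_pos_of_pos (hψpos k θ') _).ne'
            (Real.rpow_pos_of_pos (hμpos i ω θ') _).ne',
          Real.log_rpow (hψpos k θ'), Real.log_rpow (hμpos i ω θ'), hψ,
          Real.log_div (mul_pos (hfpos _ _ _) (hμpos i ω θ')).ne' (hDk k).ne',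
          Real.log_mul (hfpos _ _ _).ne' (hμpos i ω θ').ne']
      rw [key θ, key θ₀, sub_sub_sub_cancel_right, ← Finset.sum_sub_distrib]
      have h2 : ∑ k, (π k * (q k (i+1) ω * (Real.log (f k θ (ξ k (i+1) ω)) +
            Real.log (μ i ω θ) - Real.log (∑ θ'', f k θ'' (ξ k (i+1) ω) * μ i ω θ''))
            + (1 - q k (i+1) ω) * Real.log (μ i ω θ)) -
          π k * (q k (i+1) ω * (Real.log (f k θ₀ (ξ k (i+1) ω)) +
            Real.log (μ i ω θ₀) - Real.log (∑ θ'', f k θ'' (ξ k (i+1) ω) * μ i ω θ''))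
            + (1 - q k (i+1) ω) * Real.log (μ i ω θ₀))) =
          ∑ k, (π k * (Real.log (μ i ω θ) - Real.log (μ i ω θ₀)) +
            π k * q k (i+1) ω *
              (Real.log (f k θ (ξ k (i+1) ω)) - Real.log (f k θ₀ (ξ k (i+1) ω)))) :=
        Finset.sum_congr rfl fun k _ => by ring
      rw [h2, Finset.sum_add_distrib, ← Finset.sum_mul, hπsum, one_mul]
  -- the increments
  set W : Fin K → Θ → ℕ → Ω → ℝ := fun k θ j ω => q k (j+1) ω *
    (Real.log (f k θ (ξ k (j+1) ω)) - Real.log (f k θ₀ (ξ k (j+1) ω))) with hW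
  -- strong law for each pair (k, θ)
  have hslln : ∀ (k : Fin K) (θ : Θ), ∀ᵐ ω ∂ℙ, Tendsto
      (fun n : ℕ => (∑ j ∈ Finset.range n, W k θ j ω) / n) atTop
      (𝓝 (p k * -(d k θ))) := by
    intro k θ
    have hL : Measurable (fun x : X k => Real.log (f k θ x) - Real.log (f k θ₀ x)) :=
      ((hfmeas k θ).log).sub ((hfmeas k θ₀).log)
    have hqmap : ∀ n m : ℕ, Measure.map (q k n) ℙ = Measure.map (q k m) ℙ := by
      intro n m
      ext s hs
      rw [Measure.map_apply (hqmeas k n) hs, Measure.map_apply (hqmeas k m) hs]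
      have hcompl : ∀ j : ℕ, ℙ (q k j ⁻¹' s) =
          (if (1:ℝ) ∈ s then ENNReal.ofReal (p k) else 0)
          + (if (0:ℝ) ∈ s then 1 - ENNReal.ofReal (p k) else 0) := by
        intro j
        have hzs : {ω | q k j ω = 0} = {ω | q k j ω = 1}ᶜ := by
          ext ω; rcases hqval k j ω with h | h <;> simp [h]
        have hms : MeasurableSet {ω | q k j ω = 1} := hqmeas k j (measurableSet_singleton 1)
        have hp0 : ℙ {ω | q k j ω = 0} = 1 - ENNReal.ofReal (p k) := by
          rw [hzs, measure_compl hms (measure_ne_top _ _), measure_univ, hqlaw]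
        by_cases h1 : (1:ℝ) ∈ s <;> by_cases h0 : (0:ℝ) ∈ s
        · have huniv : q k j ⁻¹' s = Set.univ := Set.eq_univ_of_forall fun ω => by
            rcases hqval k j ω with h | h <;> simp [Set.mem_preimage, h, h0, h1]
          rw [huniv, measure_univ, if_pos h1, if_pos h0]
          exact (add_tsub_cancel_of_le (ENNReal.ofReal_le_one.mpr (hp k).2)).symm
        · have hset : q k j ⁻¹' s = {ω | q k j ω = 1} := Set.ext fun ω => by
            rcases hqval k j ω with h | h <;> simp [Set.mem_preimage, h, h0, h1]
          rw [hset, hqlaw, if_pos h1, if_neg h0, add_zero]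
        · have hset : q k j ⁻¹' s = {ω | q k j ω = 0} := Set.ext fun ω => by
            rcases hqval k j ω with h | h <;> simp [Set.mem_preimage, h, h0, h1]
          rw [hset, hp0, if_neg h1, if_pos h0, zero_add]
        · have hset : q k j ⁻¹' s = ∅ := Set.eq_empty_of_forall_notMem fun ω => by
            rcases hqval k j ω with h | h <;> simp [Set.mem_preimage, h, h0, h1]
          rw [hset, measure_empty, if_neg h1, if_neg h0, add_zero]
      rw [hcompl n, hcompl m]
    have hqξk : ∀ n : ℕ, IndepFun (q k n) (ξ k n) ℙ :=
      fun n => hqξindep.comp (measurable_pi_apply (k, n)) (measurable_pi_apply (k, n))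
    have hpairmap : ∀ n : ℕ, Measure.map (fun ω => (q k n ω, ξ k n ω)) ℙ =
        (Measure.map (q k n) ℙ).prod (Measure.map (ξ k n) ℙ) := fun n =>
      (indepFun_iff_map_prod_eq_prod_map_map (hqmeas k n).aemeasurable
        (hξmeas k n).aemeasurable).mp (hqξk n)
    have hpairid : ∀ n m : ℕ, IdentDistrib (fun ω => (q k n ω, ξ k n ω))
        (fun ω => (q k m ω, ξ k m ω)) ℙ ℙ := fun n m =>
      ⟨((hqmeas k n).prodMk (hξmeas k n)).aemeasurable,
       ((hqmeas k m).prodMk (hξmeas k m)).aemeasurable,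
       by rw [hpairmap n, hpairmap m, hqmap n m, hξlaw, hξlaw]⟩
    set g : ℝ × X k → ℝ := fun z => z.1 * (Real.log (f k θ z.2) - Real.log (f k θ₀ z.2))
      with hg
    have hgmeas : Measurable g := measurable_fst.mul (hL.comp measurable_snd)
    have hWid : ∀ n : ℕ, IdentDistrib (W k θ n) (W k θ 0) ℙ ℙ := fun n => by
      have h := (hpairid (n+1) 1).comp hgmeas
      exact h
    have hLint : ∀ n : ℕ, Integrable (fun ω => Real.log (f k θ (ξ k n ω)) -
        Real.log (f k θ₀ (ξ k n ω))) ℙ := by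
      intro n
      have h1 : Integrable (fun x => Real.log (f k θ x) - Real.log (f k θ₀ x))
          (Measure.map (ξ k n) ℙ) := by
        rw [hξlaw]
        rw [integrable_withDensity_iff ((hfmeas k θ₀).ennreal_ofReal)
          (ae_of_all _ fun x => ENNReal.ofReal_lt_top)]
        have heq : (fun x => (Real.log (f k θ x) - Real.log (f k θ₀ x)) *
            (ENNReal.ofReal (f k θ₀ x)).toReal) =
            fun x => -(f k θ₀ x * Real.log (f k θ₀ x / f k θ x)) := by
          funext x
          rw [ENNReal.toReal_ofReal (hfpos k θ₀ x).le,
            Real.log_div (hfpos k θ₀ x).ne' (hfpos k θ x).ne']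
          ring
        rw [heq]
        exact (hdint k θ).neg
      exact (integrable_map_measure hL.aestronglyMeasurable
        (hξmeas k n).aemeasurable).mp h1
    have hLval : ∫ ω, (Real.log (f k θ (ξ k 1 ω)) - Real.log (f k θ₀ (ξ k 1 ω))) ∂ℙ
        = -(d k θ) := by
      rw [← integral_map (hξmeas k 1).aemeasurable hL.aestronglyMeasurable, hξlaw]
      have hd2 : ((ν k).withDensity fun x => ENNReal.ofReal (f k θ₀ x)) =
          (ν k).withDensity fun x => ((f k θ₀ x).toNNReal : ENNReal) := rfl
      rw [hd2, integral_withDensity_eq_integral_smul (hfmeas k θ₀).real_toNNReal _, hd,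
        ← integral_neg]
      congr 1; funext x
      simp only [NNReal.smul_def, smul_eq_mul, Real.coe_toNNReal _ (hfpos k θ₀ x).le,
        Real.log_div (hfpos k θ₀ x).ne' (hfpos k θ x).ne']
      ring
    have hqint : ∀ n, Integrable (q k n) ℙ := fun n =>
      (integrable_const (1:ℝ)).mono' (hqmeas k n).aestronglyMeasurable
        (ae_of_all _ fun ω => by rcases hqval k n ω with h | h <;> simp [h])
    have hqintval : ∫ ω, q k 1 ω ∂ℙ = p k := by
      have hind : q k 1 = Set.indicator {ω | q k 1 ω = 1} (fun _ => (1:ℝ)) := by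
        funext ω
        rcases hqval k 1 ω with h | h
        · rw [h]; symm; apply Set.indicator_of_notMem; simp [h]
        · rw [h]; symm; exact Set.indicator_of_mem h (fun _ => (1:ℝ))
      rw [hind, integral_indicator_const _
        (show MeasurableSet {ω | q k 1 ω = 1} from hqmeas k 1 (measurableSet_singleton 1)),
        measureReal_def, hqlaw,
        smul_eq_mul, mul_one, ENNReal.toReal_ofReal (hp k).1.le]
    have hqL : IndepFun (q k 1) (fun ω => Real.log (f k θ (ξ k 1 ω)) -
        Real.log (f k θ₀ (ξ k 1 ω))) ℙ := (hqξk 1).comp measurable_id hL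
    have hWint : Integrable (W k θ 0) ℙ := by
      have hWshape : W k θ 0 = fun ω => q k 1 ω * (Real.log (f k θ (ξ k 1 ω)) -
          Real.log (f k θ₀ (ξ k 1 ω))) := rfl
      rw [hWshape]
      refine ((hLint 1).abs).mono'
        (((hqmeas k 1).mul (hL.comp (hξmeas k 1))).aestronglyMeasurable)
        (ae_of_all _ fun ω => ?_)
      rcases hqval k 1 ω with h | h <;> rw [Real.norm_eq_abs, abs_mul, h] <;>
        simp [abs_nonneg]
    have hWval : ∫ ω, W k θ 0 ω ∂ℙ = p k * -(d k θ) := by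
      have hmul := hqL.integral_mul_eq_mul_integral (hqint 1).aestronglyMeasurable (hLint 1).aestronglyMeasurable
      have hWshape : W k θ 0 = q k 1 * (fun ω => Real.log (f k θ (ξ k 1 ω)) -
          Real.log (f k θ₀ (ξ k 1 ω))) := rfl
      rw [hWshape, hmul, hqintval, hLval]
    have hWindep : Pairwise (Function.onFun (IndepFun · · ℙ) (W k θ)) := by
      intro m n hmn
      have hpair : IndepFun (fun ω => (q k (m+1) ω, ξ k (m+1) ω))
          (fun ω => (q k (n+1) ω, ξ k (n+1) ω)) ℙ := by
        refine aux_indepFun_pair (hqmeas k (m+1)) (hqmeas k (n+1)) (hξmeas k (m+1))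
          (hξmeas k (n+1)) ?_ ?_ (hqξk (m+1)) (hqξk (n+1)) ?_
        · exact hqindep.indepFun (i := (k, m+1)) (j := (k, n+1))
            (fun h => hmn (by injection h with h1 h2; exact Nat.succ_injective h2))
        · exact (hξindep k).indepFun (fun h => hmn (Nat.succ_injective h))
        · exact hqξindep.comp
            ((measurable_pi_apply ((k, m+1) : Fin K × ℕ)).prodMk
              (measurable_pi_apply ((k, n+1) : Fin K × ℕ)))
            ((measurable_pi_apply ((k, m+1) : Fin K × ℕ)).prodMk
              (measurable_pi_apply ((k, n+1) : Fin K × ℕ)))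
      exact hpair.comp hgmeas hgmeas
    have hout := strong_law_ae_real (W k θ) hWint hWindep hWid
    rw [hWval] at hout
    exact hout
  -- KL divergences are nonnegative
  have hdnn : ∀ (k : Fin K) θ, 0 ≤ d k θ := by
    intro k θ
    rw [hd]
    have hintθ : Integrable (f k θ) (ν k) := integrable_of_integral_eq_one (hfprob k θ)
    have hintθ₀ : Integrable (f k θ₀) (ν k) := integrable_of_integral_eq_one (hfprob k θ₀)
    have hle : ∀ x, -(f k θ₀ x * Real.log (f k θ₀ x / f k θ x)) ≤ f k θ x - f k θ₀ x := by
      intro x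
      have h1 : -(f k θ₀ x * Real.log (f k θ₀ x / f k θ x)) =
          f k θ₀ x * Real.log (f k θ x / f k θ₀ x) := by
        rw [Real.log_div (hfpos k θ₀ x).ne' (hfpos k θ x).ne',
          Real.log_div (hfpos k θ x).ne' (hfpos k θ₀ x).ne']
        ring
      rw [h1]
      have h2 : Real.log (f k θ x / f k θ₀ x) ≤ f k θ x / f k θ₀ x - 1 :=
        Real.log_le_sub_one_of_pos (div_pos (hfpos k θ x) (hfpos k θ₀ x))
      have h3 := mul_le_mul_of_nonneg_left h2 (hfpos k θ₀ x).le
      have h0 : f k θ₀ x ≠ 0 := (hfpos k θ₀ x).ne'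
      have h4 : f k θ₀ x * (f k θ x / f k θ₀ x - 1) = f k θ x - f k θ₀ x := by
        field_simp
      linarith
    have hin : Integrable (fun x => -(f k θ₀ x * Real.log (f k θ₀ x / f k θ x))) (ν k) :=
      (hdint k θ).neg
    have hin2 : Integrable (fun x => f k θ x - f k θ₀ x) (ν k) := hintθ.sub hintθ₀
    have h5 := integral_mono hin hin2 hle
    rw [integral_neg, integral_sub hintθ hintθ₀, hfprob, hfprob] at h5
    linarith
  -- combine
  have hae : ∀ᵐ ω ∂ℙ, ∀ (k : Fin K) (θ : Θ), Tendsto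
      (fun n : ℕ => (∑ j ∈ Finset.range n, W k θ j ω) / n) atTop
      (𝓝 (p k * -(d k θ))) := by
    rw [ae_all_iff]; intro k; rw [ae_all_iff]; intro θ; exact hslln k θ
  filter_upwards [hae] with ω hω
  -- ratios tend to 0 for θ ≠ θ₀
  have hr0 : ∀ θ, θ ≠ θ₀ → Tendsto (fun n => μ n ω θ / μ n ω θ₀) atTop (𝓝 0) := by
    intro θ hθ
    have hΛθ : Tendsto (fun n : ℕ => (Real.log (μ n ω θ) - Real.log (μ n ω θ₀)) / n) atTop
        (𝓝 (∑ k, π k * (p k * -(d k θ)))) := by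
      have hrw : ∀ n : ℕ, (Real.log (μ n ω θ) - Real.log (μ n ω θ₀)) / n =
          (Real.log (μ₀ θ) - Real.log (μ₀ θ₀)) / n +
          ∑ k, π k * ((∑ j ∈ Finset.range n, W k θ j ω) / n) := by
        intro n
        rw [hΛ n ω θ, add_div, Finset.sum_comm]
        congr 1
        rw [Finset.sum_div]
        refine Finset.sum_congr rfl fun k _ => ?_
        rw [← mul_div_assoc, Finset.mul_sum]
        refine congrArg (· / (n : ℝ)) (Finset.sum_congr rfl fun j _ => ?_)
        simp only [hW]; ring
      have hlim : Tendsto (fun n : ℕ => (Real.log (μ₀ θ) - Real.log (μ₀ θ₀)) / n +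
          ∑ k, π k * ((∑ j ∈ Finset.range n, W k θ j ω) / n)) atTop
          (𝓝 (0 + ∑ k, π k * (p k * -(d k θ)))) :=
        (tendsto_const_div_atTop_nhds_zero_nat _).add
          (tendsto_finset_sum _ fun k _ => (hω k θ).const_mul (π k))
      rw [zero_add] at hlim
      exact hlim.congr fun n => (hrw n).symm
    have hneg : (∑ k, π k * (p k * -(d k θ))) < 0 := by
      have : (∑ k, π k * (p k * -(d k θ))) = -(∑ k, π k * (p k * d k θ)) := by
        rw [← Finset.sum_neg_distrib]; exact Finset.sum_congr rfl fun k _ => by ring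
      rw [this, neg_lt, neg_zero]
      obtain ⟨k₀, hk₀⟩ := hglobal θ hθ
      refine Finset.sum_pos' (fun k _ => mul_nonneg (hπ k).1.le
        (mul_nonneg (hp k).1.le (hdnn k θ))) ⟨k₀, Finset.mem_univ _, ?_⟩
      exact mul_pos (hπ k₀).1 (mul_pos (hp k₀).1 hk₀)
    have hbot : Tendsto (fun n => Real.log (μ n ω θ) - Real.log (μ n ω θ₀)) atTop atBot :=
      aux_tendsto_atBot hneg hΛθ
    have := Real.tendsto_exp_atBot.comp hbot
    refine this.congr fun n => ?_
    show Real.exp (Real.log (μ n ω θ) - Real.log (μ n ω θ₀)) = μ n ω θ / μ n ω θ₀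
    rw [Real.exp_sub, Real.exp_log (hμpos n ω θ), Real.exp_log (hμpos n ω θ₀)]
  -- conclude
  have hkey : ∀ n : ℕ, μ n ω θ₀ = (∑ θ, μ n ω θ / μ n ω θ₀)⁻¹ := by
    intro n
    rw [← Finset.sum_div, hμsum n ω, one_div, inv_inv]
  have hsumlim : Tendsto (fun n => ∑ θ, μ n ω θ / μ n ω θ₀) atTop (𝓝 1) := by
    have h1 : (1 : ℝ) = ∑ θ, (if θ = θ₀ then (1:ℝ) else 0) := by
      rw [Finset.sum_ite_eq' Finset.univ θ₀ (fun _ => (1:ℝ))]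
      simp
    rw [h1]
    refine tendsto_finset_sum _ fun θ _ => ?_
    by_cases hθ : θ = θ₀
    · subst hθ
      simp only [if_pos rfl]
      have : ∀ n, μ n ω θ / μ n ω θ = 1 := fun n => div_self (hμpos n ω θ).ne'
      simp only [this]
      exact tendsto_const_nhds
    · simp only [if_neg hθ]
      exact hr0 θ hθ
  have := hsumlim.inv₀ one_ne_zero
  rw [inv_one] at this
  exact this.congr fun n => (hkey n).symm
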